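/- Let A be a finite set of nonzero vectors in ℝ^d and k ∈ {1,…,d}, m(k,d) = max{d+1, 2(d−k+1)}. The system of inequalities a·x ≤ 0 for all a ∈ A has at least k linearly independent solutions if and only if for every subset B ⊆ A with |B| ≤ m(k,d) the system a·x ≤ 0 for all a ∈ B has at least k linearly independent solutions. -/

import Mathlib

open Finset Submodule Module Set Topology
open scoped RealInnerProductSpace

set_option linter.unusedSectionVars false
set_option maxHeartbeats 1000000

section Helly
variable {E : Type*} [NormedAddCommGroup E] [InnerProductSpace ℝ E] [DecidableEq E]

/-- conic hull of a finite set, as a set. -/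
def scone (X : Finset E) : Set E :=
  {v | ∃ c : E → ℝ, (∀ x ∈ X, 0 ≤ c x) ∧ v = ∑ x ∈ X, c x • x}

lemma zero_mem_scone (X : Finset E) : (0:E) ∈ scone X :=
  ⟨fun _ => 0, fun _ _ => le_rfl, by simp⟩

lemma mem_scone_of_mem {X : Finset E} {x : E} (hx : x ∈ X) : x ∈ scone X := by
  classical
  refine ⟨fun y => if y = x then 1 else 0, fun y _ => by positivity, ?_⟩
  rw [Finset.sum_eq_single x]
  · simp
  · intro b _ hb; simp [hb]
  · intro h; exact absurd hx h

lemma scone_mono {X Y : Finset E} (h : X ⊆ Y) : scone X ⊆ scone Y := by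
  classical
  rintro v ⟨c, hc, rfl⟩
  refine ⟨fun y => if y ∈ X then c y else 0, fun y _ => ?_, ?_⟩
  · simp only []
    split <;> [exact hc _ ‹_›; exact le_rfl]
  · rw [← Finset.sum_subset h]
    · exact Finset.sum_congr rfl fun x hx => by simp [hx]
    · intro x _ hx; simp [hx]

lemma add_mem_scone {X : Finset E} {v w : E} (hv : v ∈ scone X) (hw : w ∈ scone X) :
    v + w ∈ scone X := by
  obtain ⟨c, hc, rfl⟩ := hv
  obtain ⟨c', hc', rfl⟩ := hw
  exact ⟨c + c', fun x hx => add_nonneg (hc x hx) (hc' x hx), by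
    simp [add_smul, Finset.sum_add_distrib]⟩

lemma smul_mem_scone {X : Finset E} {v : E} {t : ℝ} (ht : 0 ≤ t) (hv : v ∈ scone X) :
    t • v ∈ scone X := by
  obtain ⟨c, hc, rfl⟩ := hv
  exact ⟨fun x => t * c x, fun x hx => mul_nonneg ht (hc x hx), by
    rw [Finset.smul_sum]; exact Finset.sum_congr rfl fun x _ => by rw [mul_smul]⟩

lemma sum_mem_scone {X : Finset E} {ι : Type*} {s : Finset ι} {f : ι → E}
    (h : ∀ i ∈ s, f i ∈ scone X) : ∑ i ∈ s, f i ∈ scone X := by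
  classical
  induction s using Finset.induction with
  | empty => simpa using zero_mem_scone X
  | insert _ _ hx ih =>
    rw [Finset.sum_insert hx]
    exact add_mem_scone (h _ (Finset.mem_insert_self _ _))
      (ih fun i hi => h i (Finset.mem_insert_of_mem hi))

lemma scone_subset_span (X : Finset E) : scone X ⊆ (span ℝ (X : Set E) : Set E) := by
  rintro v ⟨c, _, rfl⟩
  exact Submodule.sum_mem _ fun x hx => Submodule.smul_mem _ _ (subset_span hx)

/-- with a full-support positive dependency, negatives of elements are in the cone -/
lemma neg_mem_scone {X : Finset E} {β : E → ℝ} (hβ : ∀ x ∈ X, 0 < β x)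
    (hsum : ∑ x ∈ X, β x • x = 0) {x₀ : E} (hx₀ : x₀ ∈ X) : -x₀ ∈ scone X := by
  classical
  have h1 : ∑ x ∈ X.erase x₀, β x • x = -(β x₀ • x₀) := by
    have h := Finset.sum_erase_add X (fun x => β x • x) hx₀
    rw [hsum] at h
    exact eq_neg_of_add_eq_zero_left h
  have h2 : (β x₀)⁻¹ • ∑ x ∈ X.erase x₀, β x • x ∈ scone X := by
    refine smul_mem_scone (inv_nonneg.2 (hβ x₀ hx₀).le) ?_
    exact scone_mono (Finset.erase_subset _ _) ⟨β, fun x hx => (hβ x (Finset.mem_of_mem_erase hx)).le, rfl⟩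
  rwa [h1, smul_neg, smul_smul, inv_mul_cancel₀ (hβ x₀ hx₀).ne', one_smul] at h2

lemma span_subset_scone {X : Finset E} {β : E → ℝ} (hβ : ∀ x ∈ X, 0 < β x)
    (hsum : ∑ x ∈ X, β x • x = 0) :
    (span ℝ (X : Set E) : Set E) ⊆ scone X := by
  intro v hv
  obtain ⟨f, -, rfl⟩ := mem_span_finset.1 hv
  refine sum_mem_scone fun x hx => ?_
  by_cases h : 0 ≤ f x
  · exact smul_mem_scone h (mem_scone_of_mem hx)
  · have := smul_mem_scone (t := -f x) (by linarith) (neg_mem_scone hβ hsum hx)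
    rwa [smul_neg, neg_smul, neg_neg] at this

/-- perturbation lemma -/
lemma perturb (X : Finset E) (c g : E → ℝ) (hc : ∀ x ∈ X, 0 ≤ c x)
    (hg : ∃ x ∈ X, g x ≠ 0) :
    ∃ t : ℝ, ∃ x₀ ∈ X, g x₀ ≠ 0 ∧ (∀ x ∈ X, 0 ≤ c x - t * g x) ∧ c x₀ - t * g x₀ = 0 := by
  classical
  obtain ⟨z, hz, hgz⟩ := hg
  have hD : (X.filter (fun x => g x ≠ 0)).Nonempty := ⟨z, Finset.mem_filter.2 ⟨hz, hgz⟩⟩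
  obtain ⟨x₀, hx₀, hmin⟩ := Finset.exists_min_image _ (fun x => c x / |g x|) hD
  obtain ⟨hx₀X, hgx₀⟩ := Finset.mem_filter.1 hx₀
  refine ⟨c x₀ / g x₀, x₀, hx₀X, hgx₀, ?_, by rw [div_mul_cancel₀ _ hgx₀, sub_self]⟩
  intro x hx
  by_cases hgx : g x = 0
  · simpa [hgx] using hc x hx
  · have h1 : |c x₀ / g x₀| ≤ c x / |g x| := by
      rw [abs_div, abs_of_nonneg (hc x₀ hx₀X)]
      exact hmin x (Finset.mem_filter.2 ⟨hx, hgx⟩)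
    have h2 : (c x₀ / g x₀) * g x ≤ c x := by
      calc (c x₀ / g x₀) * g x ≤ |(c x₀ / g x₀) * g x| := le_abs_self _
        _ = |c x₀ / g x₀| * |g x| := abs_mul _ _
        _ ≤ (c x / |g x|) * |g x| := by
            exact mul_le_mul_of_nonneg_right h1 (abs_nonneg _)
        _ = c x := by field_simp
    linarith

/-- circuit extraction lemma -/
lemma exists_circuit : ∀ (n : ℕ) (X : Finset E), X.card ≤ n → (0:E) ∉ X →
    ∀ (c : E → ℝ), (∀ x ∈ X, 0 ≤ c x) → ∑ x ∈ X, c x • x = 0 → (∃ x ∈ X, c x ≠ 0) →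
    ∃ A : Finset E, A ⊆ X ∧ A.Nonempty ∧
      (∀ a ∈ A, LinearIndependent ℝ ((↑) : ↥(A.erase a) → E)) ∧
      ∃ γ : E → ℝ, (∀ a ∈ A, 0 < γ a) ∧ ∑ a ∈ A, γ a • a = 0 := by
  classical
  intro n
  induction n with
  | zero =>
    intro X hcard _ c _ _ hne
    obtain ⟨x, hx, _⟩ := hne
    simp [Finset.card_eq_zero.1 (Nat.le_zero.1 hcard)] at hx
  | succ n ih =>
    intro X hcard h0 c hc hsum hne
    by_cases hzero : ∃ x ∈ X, c x = 0
    · -- drop a zero-coefficient element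
      obtain ⟨x, hxX, hcx⟩ := hzero
      have hsum' : ∑ y ∈ X.erase x, c y • y = 0 := by
        have h := Finset.sum_erase_add X (fun y => c y • y) hxX
        rw [hsum, hcx, zero_smul, add_zero] at h
        exact h
      obtain ⟨z, hz, hcz⟩ := hne
      have hzx : z ≠ x := fun h => hcz (h ▸ hcx)
      obtain ⟨A, hAX, hA⟩ := ih (X.erase x)
        (by have := Finset.card_erase_of_mem hxX; omega)
        (fun h => h0 (Finset.mem_of_mem_erase h)) c
        (fun y hy => hc y (Finset.mem_of_mem_erase hy)) hsum'
        ⟨z, Finset.mem_erase.2 ⟨hzx, hz⟩, hcz⟩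
      exact ⟨A, hAX.trans (Finset.erase_subset _ _), hA⟩
    · push_neg at hzero
      have hpos : ∀ x ∈ X, 0 < c x := fun x hx => (hc x hx).lt_of_ne' (hzero x hx)
      by_cases hdep : ∀ a ∈ X, LinearIndependent ℝ ((↑) : ↥(X.erase a) → E)
      · obtain ⟨z, hz, _⟩ := hne
        exact ⟨X, Finset.Subset.refl _, ⟨z, hz⟩, hdep, c, hpos, hsum⟩
      · push_neg at hdep
        obtain ⟨a, haX, hnli⟩ := hdep
        rw [Fintype.not_linearIndependent_iff] at hnli
        obtain ⟨g, hgsum, i, hgi⟩ := hnli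
        set g' : E → ℝ := fun x => if h : x ∈ X.erase a then g ⟨x, h⟩ else 0 with hg'
        have hga : g' a • a = 0 := by
          have h : g' a = 0 := by simp [hg']
          rw [h, zero_smul]
        have hg'sum : ∑ x ∈ X, g' x • x = 0 := by
          rw [← Finset.sum_erase (f := fun x => g' x • x) X hga,
            ← Finset.sum_attach (X.erase a) (fun x => g' x • x),
            Finset.attach_eq_univ, ← hgsum]
          refine Finset.sum_congr rfl fun j _ => ?_
          have : g' (j:E) = g j := by
            show (if h : (j:E) ∈ X.erase a then g ⟨(j:E), h⟩ else 0) = g j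
            rw [dif_pos j.2]
          rw [this]
        have hg'ne : ∃ x ∈ X, g' x ≠ 0 := by
          refine ⟨(i : E), Finset.mem_of_mem_erase i.2, ?_⟩
          have : g' (i:E) = g i := by
            show (if h : (i:E) ∈ X.erase a then g ⟨(i:E), h⟩ else 0) = g i
            rw [dif_pos i.2]
          rw [this]; exact hgi
        obtain ⟨t, x₀, hx₀X, hgx₀, hnonneg, hzero₀⟩ := perturb X c g' hc hg'ne
        have hx₀a : x₀ ≠ a := by
          intro h; apply hgx₀; simp [hg', h]
        set c' : E → ℝ := fun x => c x - t * g' x with hc'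
        have hc'sum : ∑ x ∈ X.erase x₀, c' x • x = 0 := by
          have h1 : ∑ x ∈ X, c' x • x = 0 := by
            simp only [hc', sub_smul, mul_smul, Finset.sum_sub_distrib, hsum,
              ← Finset.smul_sum, hg'sum, smul_zero, sub_zero]
          have h := Finset.sum_erase_add X (fun x => c' x • x) hx₀X
          rw [h1, show c' x₀ = 0 from hzero₀, zero_smul, add_zero] at h
          exact h
        have hc'a : c' a ≠ 0 := by
          have : g' a = 0 := by simp [hg']
          simp only [hc', this, mul_zero, sub_zero]
          exact (hpos a haX).ne'
        obtain ⟨A, hAX, hA⟩ := ih (X.erase x₀)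
          (by have := Finset.card_erase_of_mem hx₀X; omega)
          (fun h => h0 (Finset.mem_of_mem_erase h)) c'
          (fun y hy => hnonneg y (Finset.mem_of_mem_erase hy)) hc'sum
          ⟨a, Finset.mem_erase.2 ⟨hx₀a.symm, haX⟩, hc'a⟩
        exact ⟨A, hAX.trans (Finset.erase_subset _ _), hA⟩

lemma isClosed_scone_of_li [FiniteDimensional ℝ E] {F : Finset E}
    (h : LinearIndependent ℝ ((↑) : ↥F → E)) : IsClosed (scone F) := by
  classical
  set T : (↥F → ℝ) →ₗ[ℝ] E := Fintype.linearCombination ℝ ((↑) : ↥F → E) with hT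
  have hker : LinearMap.ker T = ⊥ := by
    rw [LinearMap.ker_eq_bot']
    intro f hf
    have := Fintype.linearIndependent_iff.1 h f
      (by rw [← Fintype.linearCombination_apply ℝ ((↑) : ↥F → E) f]; exact hf)
    funext i; exact this i
  have hemb : IsClosedEmbedding T := LinearMap.isClosedEmbedding_of_injective hker
  have heq : scone F = T '' {f : ↥F → ℝ | ∀ x, 0 ≤ f x} := by
    ext v
    constructor
    · rintro ⟨c, hc, rfl⟩
      refine ⟨fun x => c ↑x, fun x => hc _ x.2, ?_⟩
      rw [hT, Fintype.linearCombination_apply, ← Finset.sum_attach F (fun x => c x • x),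
        Finset.attach_eq_univ]
    · rintro ⟨f, hf, rfl⟩
      refine ⟨fun x => if h : x ∈ F then f ⟨x, h⟩ else 0, fun x hx => by simp [hx, hf _], ?_⟩
      rw [hT, Fintype.linearCombination_apply, ← Finset.sum_attach F
        (fun x => (if h : x ∈ F then f ⟨x, h⟩ else 0) • x), Finset.attach_eq_univ]
      refine Finset.sum_congr rfl fun j _ => ?_
      rw [dif_pos j.2]
  rw [heq]
  refine hemb.isClosedMap _ ?_
  have hset : {f : ↥F → ℝ | ∀ x, 0 ≤ f x} = ⋂ x : ↥F, (fun f : ↥F → ℝ => f x) ⁻¹' Ici 0 := by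
    ext f; simp [Set.mem_iInter, Set.mem_preimage]
  rw [hset]
  exact isClosed_iInter fun x => IsClosed.preimage (continuous_apply x) isClosed_Ici

lemma exists_li_scone : ∀ (n : ℕ) (X : Finset E), X.card ≤ n → ∀ v ∈ scone X,
    ∃ S : Finset E, S ⊆ X ∧ LinearIndependent ℝ ((↑) : ↥S → E) ∧ v ∈ scone S := by
  classical
  intro n
  induction n with
  | zero =>
    intro X hcard v hv
    have : X = ∅ := Finset.card_eq_zero.1 (Nat.le_zero.1 hcard)
    subst this
    exact ⟨∅, Finset.Subset.refl _, linearIndependent_empty_type, hv⟩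
  | succ n ih =>
    intro X hcard v hv
    by_cases hli : LinearIndependent ℝ ((↑) : ↥X → E)
    · exact ⟨X, Finset.Subset.refl _, hli, hv⟩
    · obtain ⟨c, hc, rfl⟩ := hv
      rw [Fintype.not_linearIndependent_iff] at hli
      obtain ⟨g, hgsum, i, hgi⟩ := hli
      set g' : E → ℝ := fun x => if h : x ∈ X then g ⟨x, h⟩ else 0 with hg'
      have hg'sum : ∑ x ∈ X, g' x • x = 0 := by
        rw [← Finset.sum_attach X (fun x => g' x • x), Finset.attach_eq_univ, ← hgsum]
        refine Finset.sum_congr rfl fun j _ => ?_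
        have : g' (j:E) = g j := by
          show (if h : (j:E) ∈ X then g ⟨(j:E), h⟩ else 0) = g j
          rw [dif_pos j.2]
        rw [this]
      have hg'ne : ∃ x ∈ X, g' x ≠ 0 := by
        refine ⟨(i : E), i.2, ?_⟩
        have : g' (i:E) = g i := by
          show (if h : (i:E) ∈ X then g ⟨(i:E), h⟩ else 0) = g i
          rw [dif_pos i.2]
        rw [this]; exact hgi
      obtain ⟨t, x₀, hx₀X, hgx₀, hnonneg, hzero₀⟩ := perturb X c g' hc hg'ne
      set c' : E → ℝ := fun x => c x - t * g' x with hc'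
      have h1 : ∑ x ∈ X, c' x • x = ∑ x ∈ X, c x • x := by
        simp only [hc', sub_smul, mul_smul, Finset.sum_sub_distrib,
          ← Finset.smul_sum, hg'sum, smul_zero, sub_zero]
      have h2 : ∑ x ∈ X.erase x₀, c' x • x = ∑ x ∈ X, c x • x := by
        have h := Finset.sum_erase_add X (fun x => c' x • x) hx₀X
        rw [show c' x₀ = 0 from hzero₀, zero_smul, add_zero, h1] at h
        exact h
      obtain ⟨S, hS, hSli, hvS⟩ := ih (X.erase x₀)
        (by have := Finset.card_erase_of_mem hx₀X; omega)
        (∑ x ∈ X, c x • x)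
        ⟨c', fun y hy => hnonneg y (Finset.mem_of_mem_erase hy), h2.symm⟩
      exact ⟨S, hS.trans (Finset.erase_subset _ _), hSli, hvS⟩

lemma isClosed_scone [FiniteDimensional ℝ E] (X : Finset E) : IsClosed (scone X) := by
  classical
  have heq : scone X =
      ⋃ S ∈ {S : Finset E | S ⊆ X ∧ LinearIndependent ℝ ((↑) : ↥S → E)}, scone S := by
    ext v
    constructor
    · intro hv
      obtain ⟨S, hSX, hli, hvS⟩ := exists_li_scone X.card X le_rfl v hv
      exact Set.mem_biUnion ⟨hSX, hli⟩ hvS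
    · intro hv
      obtain ⟨S, hS, hvS⟩ := Set.mem_iUnion₂.1 hv
      exact scone_mono hS.1 hvS
  rw [heq]
  refine Set.Finite.isClosed_biUnion ?_ fun S hS => isClosed_scone_of_li hS.2
  exact Set.Finite.subset (X.powerset : Finset (Finset E)).finite_toSet
    (fun S hS => by simpa [Finset.mem_powerset] using hS.1)

lemma scone_separation [FiniteDimensional ℝ E] [CompleteSpace E] (X : Finset E) {z : E}
    (hz : z ∉ scone X) :
    ∃ y : E, (∀ v ∈ scone X, (0:ℝ) ≤ ⟪v, y⟫) ∧ ⟪y, z⟫ < 0 := by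
  set K : ConvexCone ℝ E :=
    { carrier := scone X
      smul_mem' := fun c hc v hv => smul_mem_scone (le_of_lt hc) hv
      add_mem' := fun v hv w hw => add_mem_scone hv hw } with hK
  have hne : (K : Set E).Nonempty := ⟨0, zero_mem_scone X⟩
  have hcl : IsClosed (K : Set E) := isClosed_scone X
  obtain ⟨y, hy1, hy2⟩ : ∃ y : E, (∀ v ∈ scone X, (0:ℝ) ≤ ⟪v, y⟫) ∧ ⟪z, y⟫ < 0 :=
    ProperCone.hyperplane_separation' ({ carrier := scone X
                                         add_mem' := fun hv hw => add_mem_scone hv hw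
                                         zero_mem' := zero_mem_scone X
                                         smul_mem' := fun c _ hv => smul_mem_scone c.2 hv
                                         isClosed' := hcl } : ProperCone ℝ E) hz
  exact ⟨y, fun v hv => hy1 v hv, by rwa [real_inner_comm]⟩

lemma finrank_eq_map_add_inf_ker [FiniteDimensional ℝ E] (π : E →ₗ[ℝ] E)
    (P : Submodule ℝ E) :
    finrank ℝ P = finrank ℝ (P.map π) + finrank ℝ ↥(P ⊓ LinearMap.ker π) := by
  have h := LinearMap.finrank_range_add_finrank_ker (π.comp P.subtype)
  rw [LinearMap.range_comp, Submodule.range_subtype, LinearMap.ker_comp] at h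
  have e2 : Submodule.map P.subtype (Submodule.comap P.subtype (LinearMap.ker π))
      = P ⊓ LinearMap.ker π := Submodule.map_comap_subtype P (LinearMap.ker π)
  have e3 : finrank ℝ ↥(Submodule.comap P.subtype (LinearMap.ker π))
      = finrank ℝ ↥(P ⊓ LinearMap.ker π) := by
    rw [← e2]
    exact LinearEquiv.finrank_eq
      (Submodule.equivMapOfInjective P.subtype (Submodule.injective_subtype P) _)
  rw [e3] at h
  omega

/-- The key combinatorial lemma. -/
theorem scone_subspace_selection [FiniteDimensional ℝ E] :
    ∀ (s : ℕ) (X : Finset E) (W : Submodule ℝ E), (0:E) ∉ X →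
    (W : Set E) ⊆ scone X → s ≤ finrank ℝ W →
    ∃ Y : Finset E, Y ⊆ X ∧ ∃ N : Submodule ℝ E,
      (N : Set E) ⊆ scone Y ∧ s ≤ finrank ℝ N ∧
      Y.card ≤ max (finrank ℝ N + 1) (2 * s) ∧
      ∃ β : E → ℝ, (∀ y ∈ Y, 0 < β y) ∧ ∑ y ∈ Y, β y • y = 0 := by
  classical
  intro s
  induction s using Nat.strong_induction_on with
  | _ s ih =>
  intro X W h0 hWX hsW
  rcases Nat.eq_zero_or_pos s with hs0 | hs1
  · subst hs0
    refine ⟨∅, Finset.empty_subset _, ⊥, ?_, by simp, by simp, fun _ => 1, by simp, by simp⟩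
    intro x hx
    rw [SetLike.mem_coe, Submodule.mem_bot] at hx
    exact hx ▸ zero_mem_scone ∅
  -- pick a nonzero vector of W
  have hWne : W ≠ ⊥ := by
    intro h
    rw [h, finrank_bot ℝ E] at hsW
    omega
  obtain ⟨v, hvW, hv0⟩ := Submodule.exists_mem_ne_zero_of_ne_bot hWne
  obtain ⟨α, hα0, hαsum⟩ := hWX hvW
  obtain ⟨α', hα'0, hα'sum⟩ := hWX (W.neg_mem hvW)
  have hcsum : ∑ x ∈ X, (α x + α' x) • x = 0 := by
    simp only [add_smul, Finset.sum_add_distrib, ← hαsum, ← hα'sum]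
    abel
  have hcne : ∃ x ∈ X, α x + α' x ≠ 0 := by
    by_contra h
    push_neg at h
    apply hv0
    rw [hαsum]
    refine Finset.sum_eq_zero fun x hx => ?_
    have h1 : α x = 0 := le_antisymm (by linarith [hα'0 x hx, h x hx]) (hα0 x hx)
    rw [h1, zero_smul]
  obtain ⟨A, hAX, hAne, hAli, γ, hγpos, hγsum⟩ :=
    exists_circuit X.card X le_rfl h0 _ (fun x hx => add_nonneg (hα0 x hx) (hα'0 x hx))
      hcsum hcne
  obtain ⟨a₀, ha₀⟩ := hAne
  have hA2 : 2 ≤ A.card := by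
    by_contra h
    push_neg at h
    have hA1 : A = {a₀} := by
      apply Finset.eq_singleton_iff_unique_mem.2
      refine ⟨ha₀, fun b hb => ?_⟩
      by_contra hb'
      have h2 : 2 ≤ A.card := Finset.one_lt_card.2 ⟨b, hb, a₀, ha₀, hb'⟩
      omega
    rw [hA1, Finset.sum_singleton] at hγsum
    have hz : a₀ = 0 := by
      have := hγpos a₀ (hA1 ▸ ha₀)
      exact (smul_eq_zero.1 hγsum).resolve_left (by positivity)
    exact h0 (hz ▸ hAX ha₀)
  set U : Submodule ℝ E := span ℝ (A : Set E) with hU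
  have hUscone : (U : Set E) ⊆ scone A := span_subset_scone hγpos hγsum
  have ha₀span : a₀ ∈ span ℝ ((A.erase a₀ : Finset E) : Set E) := by
    have h := Finset.sum_erase_add A (fun a => γ a • a) ha₀
    rw [hγsum] at h
    have h2 : a₀ = (-(γ a₀)⁻¹) • ∑ x ∈ A.erase a₀, γ x • x := by
      rw [eq_neg_of_add_eq_zero_left h, smul_neg, neg_smul, neg_neg, smul_smul,
        inv_mul_cancel₀ (hγpos a₀ ha₀).ne', one_smul]
    have hmem : (-(γ a₀)⁻¹) • ∑ x ∈ A.erase a₀, γ x • x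
        ∈ span ℝ ((A.erase a₀ : Finset E) : Set E) :=
      Submodule.smul_mem _ _ (Submodule.sum_mem _ fun x hx =>
        Submodule.smul_mem _ _ (Submodule.subset_span (Finset.mem_coe.2 hx)))
    rw [← h2] at hmem
    exact hmem
  have hUspan : U = span ℝ ((A.erase a₀ : Finset E) : Set E) := by
    apply le_antisymm
    · rw [hU, Submodule.span_le]
      intro a ha
      rw [Finset.mem_coe] at ha
      rcases eq_or_ne a a₀ with rfl | hne
      · exact ha₀span
      · exact Submodule.subset_span (by
          rw [Finset.coe_erase, Set.mem_diff]
          exact ⟨by exact_mod_cast ha, by simpa using hne⟩)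
    · exact Submodule.span_mono (by
        rw [Finset.coe_erase]
        exact Set.diff_subset)
  have hrankU : finrank ℝ U = A.card - 1 := by
    rw [hUspan, finrank_span_finset_eq_card (hAli a₀ ha₀), Finset.card_erase_of_mem ha₀]
  set t₁ := finrank ℝ U with ht₁def
  have ht₁1 : 1 ≤ t₁ := by omega
  by_cases hcase : s ≤ t₁
  · refine ⟨A, hAX, U, hUscone, hcase, ?_, γ, hγpos, hγsum⟩
    have hAc : A.card = t₁ + 1 := by omega
    rw [hAc]
    exact le_max_left _ _
  push_neg at hcase
  -- quotient by U via orthogonal projection onto Uᗮ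
  set π : E →ₗ[ℝ] E := Uᗮ.subtype.comp (orthogonalProjection Uᗮ).toLinearMap with hπdef
  have hπapply : ∀ x : E, π x = (orthogonalProjection Uᗮ x : E) := fun x => rfl
  have hπmem : ∀ x : E, π x ∈ Uᗮ := fun x => by rw [hπapply]; exact (orthogonalProjection Uᗮ x).2
  have hπid : ∀ x ∈ Uᗮ, π x = x := by
    intro x hx
    have h := orthogonalProjection_mem_subspace_eq_self (K := Uᗮ) ⟨x, hx⟩
    rw [hπapply]
    exact congrArg Subtype.val h
  have hπU : ∀ x ∈ U, π x = 0 := by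
    intro x hx
    rw [hπapply]
    have h : orthogonalProjection Uᗮ x = 0 :=
      orthogonalProjection_mem_subspace_orthogonalComplement_eq_zero
        (by rwa [Submodule.orthogonal_orthogonal])
    rw [h, ZeroMemClass.coe_zero]
  have hπsub : ∀ x : E, x - π x ∈ U := by
    intro x
    have h := Submodule.sub_starProjection_mem_orthogonal (K := Uᗮ) x
    rw [Submodule.orthogonal_orthogonal] at h
    rw [hπapply]
    exact h
  have hπ0 : ∀ x : E, π x = 0 → x ∈ U := by
    intro x h
    have h2 := hπsub x
    rwa [h, sub_zero] at h2
  have hkerπ : LinearMap.ker π = U := by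
    ext x
    rw [LinearMap.mem_ker]
    exact ⟨hπ0 x, hπU x⟩
  set X' : Finset E := (X.image π).erase 0 with hX'def
  have h0' : (0:E) ∉ X' := Finset.notMem_erase _ _
  set W' : Submodule ℝ E := W.map π with hW'def
  have himage : ∀ w ∈ scone X, π w ∈ scone X' := by
    rintro w ⟨c, hc0, rfl⟩
    rw [map_sum]
    simp only [map_smul]
    have hfib := Finset.sum_fiberwise_of_maps_to (s := X) (t := X.image π) (g := π)
      (fun x hx => Finset.mem_image_of_mem π hx) (fun x => c x • π x)
    refine ⟨fun y => ∑ x ∈ X.filter (fun x => π x = y), c x, ?_, ?_⟩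
    · intro y hy
      exact Finset.sum_nonneg fun x hx => hc0 x (Finset.mem_filter.1 hx).1
    · rw [← hfib]
      have e1 : ∀ y ∈ X.image π, (∑ x ∈ X.filter (fun x => π x = y), c x • π x)
          = (∑ x ∈ X.filter (fun x => π x = y), c x) • y := by
        intro y hy
        rw [Finset.sum_smul]
        exact Finset.sum_congr rfl fun x hx => by rw [(Finset.mem_filter.1 hx).2]
      rw [Finset.sum_congr rfl e1]
      have hzero : (∑ x ∈ X.filter (fun x => π x = (0:E)), c x) • (0:E) = 0 := smul_zero _
      exact (Finset.sum_erase (f := fun y => (∑ x ∈ X.filter (fun x => π x = y), c x) • y)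
        (X.image π) hzero).symm
  have hW'X' : (W' : Set E) ⊆ scone X' := by
    rintro _ ⟨w, hw, rfl⟩
    exact himage w (hWX hw)
  have hW'rank : s - t₁ ≤ finrank ℝ W' := by
    have h := finrank_eq_map_add_inf_ker π W
    have h2 : finrank ℝ (W ⊓ LinearMap.ker π : Submodule ℝ E) ≤ t₁ := by
      rw [ht₁def]
      exact Submodule.finrank_mono (by rw [hkerπ]; exact inf_le_right)
    rw [← hW'def] at h
    omega
  set s' := s - t₁ with hs'def
  have hs'1 : 1 ≤ s' := by omega
  have hs's : s' < s := by omega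
  obtain ⟨Y', hY'X', N', hN'scone, hN'rank, hY'card, β', hβ'pos, hβ'sum⟩ :=
    ih s' hs's X' W' h0' hW'X' hW'rank
  set u := finrank ℝ N' with hudef
  -- lift Y' to Y₀ ⊆ X
  set l : E → E := fun y => if h : ∃ x ∈ X, π x = y then h.choose else 0 with hldef
  have hl : ∀ y ∈ Y', l y ∈ X ∧ π (l y) = y := by
    intro y hy
    have hy' : y ∈ X.image π := Finset.mem_of_mem_erase (hY'X' hy)
    obtain ⟨x, hx, hxy⟩ := Finset.mem_image.1 hy'
    have hex : ∃ x ∈ X, π x = y := ⟨x, hx, hxy⟩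
    have h1 := hex.choose_spec
    simp only [hldef, dif_pos hex]
    exact ⟨h1.1, h1.2⟩
  set Y₀ : Finset E := Y'.image l with hY₀def
  have hY₀X : Y₀ ⊆ X := by
    intro e he
    obtain ⟨y, hy, rfl⟩ := Finset.mem_image.1 he
    exact (hl y hy).1
  have hlinj : ∀ y ∈ Y', ∀ y' ∈ Y', l y = l y' → y = y' := by
    intro y hy y' hy' heq
    rw [← (hl y hy).2, ← (hl y' hy').2, heq]
  have hY₀card : Y₀.card = Y'.card :=
    Finset.card_image_of_injOn fun y hy y' hy' heq =>
      hlinj y (Finset.mem_coe.1 hy) y' (Finset.mem_coe.1 hy') heq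
  have himg : Y₀.image π = Y' := by
    rw [hY₀def, Finset.image_image]
    have h1 : Y'.image (π ∘ l) = Y'.image id :=
      Finset.image_congr fun y hy => (hl y (Finset.mem_coe.1 hy)).2
    rw [h1, Finset.image_id]
  have hπY₀ : ∀ e ∈ Y₀, π e ∈ Y' := by
    intro e he
    rw [← himg]
    exact Finset.mem_image_of_mem π he
  have hY₀ne0 : ∀ e ∈ Y₀, π e ≠ 0 := by
    intro e he h
    exact h0' (h ▸ (hY'X' (hπY₀ e he)))
  have hdisj : Disjoint A Y₀ := by
    rw [Finset.disjoint_left]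
    intro a ha hay
    exact hY₀ne0 a hay (hπU a (Submodule.subset_span (by exact_mod_cast ha)))
  set β : E → ℝ := fun e => β' (π e) with hβdef
  set w : E := ∑ e ∈ Y₀, β e • e with hwdef
  have hπw : π w = 0 := by
    rw [hwdef, map_sum]
    simp only [map_smul]
    rw [hY₀def, Finset.sum_image hlinj]
    have e2 : ∀ y ∈ Y', β (l y) • π (l y) = β' y • y := by
      intro y hy
      simp only [hβdef, (hl y hy).2]
    rw [Finset.sum_congr rfl e2, hβ'sum]
  have hwU : w ∈ U := hπ0 w hπw
  set Nhat : Submodule ℝ E := N'.comap π with hNhatdef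
  have hN'span : N' ≤ span ℝ ((Y' : Finset E) : Set E) := by
    intro x hx
    exact scone_subset_span Y' (hN'scone hx)
  have hY'sub : ∀ y ∈ Y', y ∈ Uᗮ := by
    intro y hy
    rw [← (hl y hy).2]
    exact hπmem _
  have hN'orth : N' ≤ Uᗮ := by
    refine hN'span.trans (Submodule.span_le.2 ?_)
    intro y hy
    exact hY'sub y (by exact_mod_cast hy)
  have hNhatrank : finrank ℝ Nhat = u + t₁ := by
    have h := finrank_eq_map_add_inf_ker π Nhat
    have h1 : Nhat.map π = N' := by
      rw [hNhatdef, Submodule.map_comap_eq]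
      apply inf_eq_right.2
      intro x hx
      exact LinearMap.mem_range.2 ⟨x, hπid x (hN'orth hx)⟩
    have h2 : Nhat ⊓ LinearMap.ker π = LinearMap.ker π := by
      apply inf_eq_right.2
      intro x hx
      rw [hkerπ] at hx
      rw [hNhatdef, Submodule.mem_comap, hπU x hx]
      exact N'.zero_mem
    rw [h1, h2, hkerπ] at h
    omega
  have hNhatscone : (Nhat : Set E) ⊆ scone (A ∪ Y₀) := by
    intro x hx
    rw [SetLike.mem_coe, hNhatdef, Submodule.mem_comap] at hx
    obtain ⟨c, hc0, hcsum2⟩ := hN'scone hx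
    set q : E := ∑ e ∈ Y₀, c (π e) • e with hqdef
    have hq : q ∈ scone Y₀ := ⟨fun e => c (π e), fun e he => hc0 _ (hπY₀ e he), rfl⟩
    have hπq : π q = π x := by
      rw [hqdef, map_sum]
      simp only [map_smul]
      rw [hY₀def, Finset.sum_image hlinj, hcsum2]
      refine Finset.sum_congr rfl fun y hy => ?_
      simp only [(hl y hy).2]
    have hxq : x - q ∈ U := by
      apply hπ0
      rw [map_sub, hπq, sub_self]
    have h1 : x - q ∈ scone A := hUscone hxq
    have h2 : x = (x - q) + q := by abel
    rw [h2]
    exact add_mem_scone (scone_mono Finset.subset_union_left h1)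
      (scone_mono Finset.subset_union_right hq)
  obtain ⟨c'', hc''0, hc''sum⟩ : -w ∈ scone A := hUscone (U.neg_mem hwU)
  have hwitness : ∃ βh : E → ℝ, (∀ y ∈ A ∪ Y₀, 0 < βh y) ∧ ∑ y ∈ A ∪ Y₀, βh y • y = 0 := by
    refine ⟨fun x => if x ∈ A then c'' x + γ x else β x, ?_, ?_⟩
    · intro y hy
      rcases Finset.mem_union.1 hy with h | h
      · simp only [if_pos h]
        have h3 := hc''0 y h
        have h4 := hγpos y h
        linarith
      · have hyA : y ∉ A := Finset.disjoint_right.1 hdisj h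
        simp only [if_neg hyA]
        exact hβ'pos _ (hπY₀ y h)
    · rw [Finset.sum_union hdisj]
      have hA : ∑ y ∈ A, (if y ∈ A then c'' y + γ y else β y) • y = -w := by
        have e3 : ∀ y ∈ A, (if y ∈ A then c'' y + γ y else β y) • y
            = c'' y • y + γ y • y := by
          intro y hy
          rw [if_pos hy, add_smul]
        rw [Finset.sum_congr rfl e3, Finset.sum_add_distrib, ← hc''sum, hγsum, add_zero]
      have hY : ∑ y ∈ Y₀, (if y ∈ A then c'' y + γ y else β y) • y = w := by
        rw [hwdef]
        refine Finset.sum_congr rfl fun e he => ?_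
        rw [if_neg (Finset.disjoint_right.1 hdisj he)]
      rw [hA, hY]
      abel
  have hcardAY : (A ∪ Y₀).card = A.card + Y'.card := by
    rw [Finset.card_union_of_disjoint hdisj, hY₀card]
  by_cases hsub1 : u + 1 ≤ 2 * s'
  · obtain ⟨βh, hβh1, hβh2⟩ := hwitness
    refine ⟨A ∪ Y₀, Finset.union_subset hAX hY₀X, Nhat, hNhatscone, ?_, ?_, βh, hβh1, hβh2⟩
    · rw [hNhatrank]; omega
    · rw [hNhatrank, hcardAY]
      have h5 : Y'.card ≤ 2 * s' := le_trans hY'card (by omega)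
      have hAcard : A.card = t₁ + 1 := by omega
      refine le_trans ?_ (le_max_right _ _)
      omega
  push_neg at hsub1
  have hY'le : Y'.card ≤ u + 1 := le_trans hY'card (by omega)
  by_cases hsub2 : u + t₁ + 2 ≤ 2 * s
  · obtain ⟨βh, hβh1, hβh2⟩ := hwitness
    refine ⟨A ∪ Y₀, Finset.union_subset hAX hY₀X, Nhat, hNhatscone, ?_, ?_, βh, hβh1, hβh2⟩
    · rw [hNhatrank]; omega
    · rw [hNhatrank, hcardAY]
      have hAcard : A.card = t₁ + 1 := by omega
      refine le_trans ?_ (le_max_right _ _)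
      omega
  push_neg at hsub2
  obtain ⟨c, -, hcw⟩ := mem_span_finset.1 hwU
  obtain ⟨amax, hamaxA, hmax⟩ := Finset.exists_max_image A (fun a => c a / γ a) ⟨a₀, ha₀⟩
  set τ : ℝ := c amax / γ amax with hτdef
  set δ : E → ℝ := fun a => τ * γ a - c a with hδdef
  have hδ0 : ∀ a ∈ A, 0 ≤ δ a := by
    intro a ha
    have h1 : c a / γ a ≤ τ := hmax a ha
    have h2 : 0 < γ a := hγpos a ha
    rw [div_le_iff₀ h2] at h1
    simp only [hδdef, sub_nonneg]
    linarith
  set M : Finset E := A.filter (fun a => δ a = 0) with hMdef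
  have hamaxM : amax ∈ M := by
    rw [hMdef, Finset.mem_filter]
    refine ⟨hamaxA, ?_⟩
    have hγne : γ amax ≠ 0 := (hγpos amax hamaxA).ne'
    simp only [hδdef, hτdef]
    rw [div_mul_cancel₀ _ hγne, sub_self]
  have hMA : M ⊆ A := Finset.filter_subset _ _
  have hM1 : 1 ≤ M.card := Finset.card_pos.2 ⟨amax, hamaxM⟩
  have hMAcard : M.card ≤ A.card := Finset.card_le_card hMA
  set Sstar : Finset E := (A \ M) ∪ Y₀ with hSdef
  have hdisj2 : Disjoint (A \ M) Y₀ := Finset.disjoint_of_subset_left Finset.sdiff_subset hdisj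
  set βs : E → ℝ := fun x => if x ∈ A then δ x else β x with hβsdef
  have hβspos : ∀ x ∈ Sstar, 0 < βs x := by
    intro x hx
    rcases Finset.mem_union.1 hx with h | h
    · obtain ⟨hxA, hxM⟩ := Finset.mem_sdiff.1 h
      simp only [hβsdef, if_pos hxA]
      rcases (hδ0 x hxA).lt_or_eq with h' | h'
      · exact h'
      · exact absurd (by rw [hMdef, Finset.mem_filter]; exact ⟨hxA, h'.symm⟩) hxM
    · have hxA : x ∉ A := Finset.disjoint_right.1 hdisj h
      simp only [hβsdef, if_neg hxA]
      exact hβ'pos _ (hπY₀ x h)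
  have hβssum : ∑ x ∈ Sstar, βs x • x = 0 := by
    rw [hSdef, Finset.sum_union hdisj2]
    have h1 : ∑ x ∈ A \ M, βs x • x = ∑ x ∈ A, δ x • x := by
      have e1 : ∀ x ∈ A \ M, βs x • x = δ x • x := by
        intro x hx
        simp only [hβsdef, if_pos (Finset.mem_sdiff.1 hx).1]
      rw [Finset.sum_congr rfl e1]
      apply Finset.sum_subset Finset.sdiff_subset
      intro x hxA hxnot
      have hxM : x ∈ M := by
        by_contra h
        exact hxnot (Finset.mem_sdiff.2 ⟨hxA, h⟩)
      rw [(Finset.mem_filter.1 hxM).2, zero_smul]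
    have h2 : ∑ x ∈ A, δ x • x = -w := by
      have e2 : ∀ x ∈ A, δ x • x = τ • (γ x • x) - c x • x := by
        intro x hx
        simp only [hδdef, sub_smul, smul_smul]
      rw [Finset.sum_congr rfl e2, Finset.sum_sub_distrib, ← Finset.smul_sum, hγsum,
        smul_zero, hcw, zero_sub]
    have h3 : ∑ x ∈ Y₀, βs x • x = w := by
      rw [hwdef]
      refine Finset.sum_congr rfl fun e he => ?_
      simp only [hβsdef, if_neg (Finset.disjoint_right.1 hdisj he)]
    rw [h1, h2, h3]
    abel
  set Nstar : Submodule ℝ E := span ℝ ((Sstar : Finset E) : Set E) with hNstardef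
  have hNstarscone : (Nstar : Set E) ⊆ scone Sstar := span_subset_scone hβspos hβssum
  have hNstarrank : u + (A.card - M.card) ≤ finrank ℝ Nstar := by
    have h := finrank_eq_map_add_inf_ker π Nstar
    have hmap : N' ≤ Nstar.map π := by
      have e1 : span ℝ ((Y' : Finset E) : Set E)
          = (span ℝ ((Y₀ : Finset E) : Set E)).map π := by
        rw [← Submodule.span_image, ← Finset.coe_image, himg]
      refine hN'span.trans ?_
      rw [e1]
      exact Submodule.map_mono (Submodule.span_mono
        (Finset.coe_subset.2 Finset.subset_union_right))
    have hli : LinearIndependent ℝ ((↑) : ↥(A \ M) → E) := by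
      have hAM : A \ M ⊆ A.erase amax := by
        intro x hx
        obtain ⟨h1, h2⟩ := Finset.mem_sdiff.1 hx
        exact Finset.mem_erase.2 ⟨fun h => h2 (h ▸ hamaxM), h1⟩
      have hbase := hAli amax hamaxA
      refine hbase.comp (fun x : ↥(A \ M) => (⟨x.1, hAM x.2⟩ : ↥(A.erase amax)))
        (fun x y h => Subtype.ext ?_)
      have h2 : ((⟨x.1, hAM x.2⟩ : ↥(A.erase amax)) : E)
          = ((⟨y.1, hAM y.2⟩ : ↥(A.erase amax)) : E) :=
        congrArg (Subtype.val : ↥(A.erase amax) → E) h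
      exact h2
    have hinf : span ℝ (((A \ M) : Finset E) : Set E) ≤ Nstar ⊓ LinearMap.ker π := by
      apply le_inf
      · exact Submodule.span_mono (Finset.coe_subset.2 Finset.subset_union_left)
      · rw [hkerπ, hU]
        exact Submodule.span_mono (Finset.coe_subset.2 (Finset.sdiff_subset.trans
          (Finset.Subset.refl A)))
    have hfr1 : finrank ℝ (span ℝ (((A \ M) : Finset E) : Set E)) = A.card - M.card := by
      rw [finrank_span_finset_eq_card hli, Finset.card_sdiff_of_subset hMA]
    have hle1 : u ≤ finrank ℝ (Nstar.map π) := Submodule.finrank_mono hmap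
    have hle2 : A.card - M.card ≤ finrank ℝ (Nstar ⊓ LinearMap.ker π : Submodule ℝ E) := by
      rw [← hfr1]; exact Submodule.finrank_mono hinf
    omega
  by_cases hfinal : s ≤ finrank ℝ Nstar
  · refine ⟨Sstar, ?_, Nstar, hNstarscone, hfinal, ?_, βs, hβspos, hβssum⟩
    · exact Finset.union_subset (Finset.sdiff_subset.trans hAX) hY₀X
    · have hcardS : Sstar.card ≤ (A.card - M.card) + Y'.card := by
        refine le_trans (Finset.card_union_le _ _) ?_
        rw [Finset.card_sdiff_of_subset hMA, hY₀card]
      refine le_trans ?_ (le_max_left _ _)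
      omega
  · exfalso
    push_neg at hfinal
    omega

end Helly

/-- Corollary on homogeneous systems of linear inequalities: the system `a·x ≤ 0, a ∈ A`
has `k` linearly independent solutions iff every subsystem of size at most
`m(k,d) = max {d+1, 2(d-k+1)}` does. -/
theorem homogeneous_system_helly (d k : ℕ) (hk1 : 1 ≤ k) (hkd : k ≤ d)
    (A : Finset (EuclideanSpace ℝ (Fin d))) (hA : ∀ a ∈ A, a ≠ 0) :
    (∃ x : Fin k → EuclideanSpace ℝ (Fin d), LinearIndependent ℝ x ∧
        ∀ i, ∀ a ∈ A, ⟪a, x i⟫ ≤ 0) ↔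
      (∀ B ⊆ A, B.card ≤ max (d + 1) (2 * (d - k + 1)) →
        ∃ x : Fin k → EuclideanSpace ℝ (Fin d), LinearIndependent ℝ x ∧
          ∀ i, ∀ a ∈ B, ⟪a, x i⟫ ≤ 0) := by
  classical
  constructor
  · rintro ⟨x, hli, hsol⟩ B hBA _
    exact ⟨x, hli, fun i a ha => hsol i a (hBA ha)⟩
  · intro hB
    by_contra hnone
    set C : Set (EuclideanSpace ℝ (Fin d)) := {z | ∀ a ∈ A, ⟪a, z⟫ ≤ 0} with hCdef
    set U₀ : Submodule ℝ (EuclideanSpace ℝ (Fin d)) := span ℝ C with hU₀def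
    have hdimE : finrank ℝ (EuclideanSpace ℝ (Fin d)) = d := finrank_euclideanSpace_fin
    have hU₀rank : finrank ℝ U₀ ≤ k - 1 := by
      by_contra h
      push_neg at h
      have hk' : k ≤ finrank ℝ U₀ := by omega
      obtain ⟨t, hts, hspan, hli⟩ := exists_linearIndependent ℝ C
      have htfin : t.Finite := hli.setFinite
      haveI := htfin.fintype
      have hcard : finrank ℝ U₀ = t.toFinset.card := by
        rw [hU₀def, ← hspan, finrank_span_set_eq_card hli]
      obtain ⟨F, hFt, hFk⟩ := Finset.exists_subset_card_eq (s := t.toFinset) (n := k) (by omega)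
      have e1 : ↥F ≃ Fin k := Fintype.equivFinOfCardEq (by rw [Fintype.card_coe, hFk])
      have hFC : ∀ z ∈ F, z ∈ C := fun z hz => hts (Set.mem_toFinset.1 (hFt hz))
      have hFt' : ∀ z ∈ F, z ∈ t := fun z hz => Set.mem_toFinset.1 (hFt hz)
      set emb : ↥F → ↥t := fun z => ⟨z.1, hFt' z.1 z.2⟩ with hembdef
      have hembinj : Function.Injective emb := by
        intro a b hab
        apply Subtype.ext
        have h2 : ((⟨a.1, hFt' a.1 a.2⟩ : ↥t) : EuclideanSpace ℝ (Fin d)) = ((⟨b.1, hFt' b.1 b.2⟩ : ↥t) : EuclideanSpace ℝ (Fin d)) :=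
          congrArg (Subtype.val : ↥t → EuclideanSpace ℝ (Fin d)) hab
        exact h2
      set x : Fin k → EuclideanSpace ℝ (Fin d) := fun j => ((emb (e1.symm j) : ↥t) : EuclideanSpace ℝ (Fin d)) with hxdef
      have hxli : LinearIndependent ℝ x :=
        (hli.comp emb hembinj).comp e1.symm e1.symm.injective
      exact hnone ⟨x, hxli, fun i a ha => hFC _ (e1.symm i).2 a ha⟩
    set W : Submodule ℝ (EuclideanSpace ℝ (Fin d)) := U₀ᗮ with hWdef
    have hWrank : d - k + 1 ≤ finrank ℝ W := by
      have h := Submodule.finrank_add_finrank_orthogonal U₀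
      rw [hdimE, ← hWdef] at h
      omega
    have h0A : (0:EuclideanSpace ℝ (Fin d)) ∉ A := fun h => hA 0 h rfl
    have hWscone : (W : Set (EuclideanSpace ℝ (Fin d))) ⊆ scone A := by
      intro z hz
      by_contra hznot
      obtain ⟨y, hy1, hy2⟩ := scone_separation A hznot
      have hyC : -y ∈ C := by
        intro a ha
        have h1 := hy1 a (mem_scone_of_mem ha)
        rw [inner_neg_right]
        linarith
      have hyU₀ : -y ∈ U₀ := Submodule.subset_span hyC
      have h2 : ⟪-y, z⟫ = 0 := (Submodule.mem_orthogonal U₀ z).1 hz (-y) hyU₀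
      rw [inner_neg_left] at h2
      linarith
    obtain ⟨B, hBA, N, hNsc, hNrank, hBcard, -⟩ :=
      scone_subspace_selection (d - k + 1) A W h0A hWscone hWrank
    have hNle : finrank ℝ N ≤ d := by
      have := Submodule.finrank_le N
      omega
    have hBcard' : B.card ≤ max (d + 1) (2 * (d - k + 1)) := by
      refine le_trans hBcard (max_le_max ?_ le_rfl)
      omega
    obtain ⟨x, hli, hsol⟩ := hB B hBA hBcard'
    have hxN : ∀ i, x i ∈ Nᗮ := by
      intro i
      rw [Submodule.mem_orthogonal]
      intro v hv
      have h1 : ∀ v' ∈ scone B, ⟪v', x i⟫ ≤ 0 := by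
        rintro v' ⟨c, hc0, rfl⟩
        rw [sum_inner]
        apply Finset.sum_nonpos
        intro a ha
        rw [real_inner_smul_left]
        exact mul_nonpos_of_nonneg_of_nonpos (hc0 a ha) (hsol i a ha)
      have h2 := h1 v (hNsc hv)
      have h3 := h1 (-v) (hNsc (N.neg_mem hv))
      rw [inner_neg_left] at h3
      linarith
    have hNorth : finrank ℝ Nᗮ ≤ k - 1 := by
      have h := Submodule.finrank_add_finrank_orthogonal N
      rw [hdimE] at h
      omega
    set x' : Fin k → ↥Nᗮ := fun i => ⟨x i, hxN i⟩ with hx'def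
    have hli' : LinearIndependent ℝ x' := by
      apply LinearIndependent.of_comp Nᗮ.subtype
      exact hli
    have hcard := hli'.fintype_card_le_finrank
    rw [Fintype.card_fin] at hcard
    omega
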